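/- arXiv:2507.11375 — 2 statements merged into one kernel-verified Lean document; each statement's English description precedes it below -/
import Mathlib

section
/- Separation of empirical atoms: if (z^j)_{j ∈ J} are points in a metric space that are pairwise at distance at least 1/k, and μ_p = (1/#Q) Σ_{q ∈ Q} δ_{z^{Φ(q,p)}} for a map Φ : Q × P → J satisfying that for p ≠ p' the number of pairs (q,q') with Φ(q,p) = Φ(q',p') is less than (3/4)#Q, then d_KW(μ_p, μ_{p'}) ≥ 1/(4k) for all p ≠ p'. -/
open scoped Classical

open MeasureTheory ENNReal Finset

/-- The Kantorovich–Wasserstein distance associated to a cost `d`. -/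
noncomputable def kwDist {Y : Type*} [MeasurableSpace Y] (d : Y → Y → ℝ)
    (μ ν : Measure Y) : ℝ :=
  sInf {c : ℝ | ∃ π : Measure (Y × Y),
    π.map Prod.fst = μ ∧ π.map Prod.snd = ν ∧ c = ∫ p, d p.1 p.2 ∂π}

/-- Separation of empirical atoms: if the points `z^j` are pairwise `1/k`-distant
and for `p ≠ p'` the number of pairs `(q,q')` with `Φ(q,p) = Φ(q',p')` is less than
`(3/4)·#Q`, then the uniform measures `μ_p = (1/#Q) Σ_q δ_{z^{Φ(q,p)}}` satisfy
`d_KW(μ_p, μ_{p'}) ≥ 1/(4k)`. -/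
theorem separated_empirical_measures {X : Type*} [MetricSpace X] [MeasurableSpace X]
    [BorelSpace X] {J Q P : Type*} [Fintype J] [Fintype Q] [Fintype P]
    (k : ℝ) (hk : 0 < k) (z : J → X)
    (hsep : ∀ i j : J, i ≠ j → 1 / k ≤ dist (z i) (z j))
    (Φ : Q × P → J)
    (hΦ : ∀ p p' : P, p ≠ p' →
      4 * (Finset.univ.filter (fun qq' : Q × Q => Φ (qq'.1, p) = Φ (qq'.2, p'))).card
        < 3 * Fintype.card Q)
    (μ : P → Measure X)
    (hμ : ∀ p, μ p = ((Fintype.card Q : ℝ≥0∞))⁻¹ • ∑ q : Q, Measure.dirac (z (Φ (q, p)))) :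
    ∀ p p' : P, p ≠ p' → 1 / (4 * k) ≤ kwDist dist (μ p) (μ p') := by
  intro p p' hpp'
  have hQpos : 0 < Fintype.card Q := by
    have := hΦ p p' hpp'; omega
  set N := Fintype.card Q with hNdef
  have hNne : (N : ℝ≥0∞) ≠ 0 := by exact_mod_cast hQpos.ne'
  have hNtop : (N : ℝ≥0∞) ≠ ⊤ := ENNReal.natCast_ne_top N
  -- injectivity of z
  have hzinj : Function.Injective z := by
    intro i j hij
    by_contra hne
    have h1 := hsep i j hne
    rw [hij, dist_self] at h1
    have h2 : 0 < 1 / k := by positivity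
    linarith
  -- total mass
  have hμuniv : ∀ r, μ r Set.univ = 1 := by
    intro r
    rw [hμ r, Measure.smul_apply, Measure.finset_sum_apply]
    simp only [Measure.dirac_apply' _ MeasurableSet.univ, Set.indicator_univ,
      Pi.one_apply, Finset.sum_const, card_univ, nsmul_eq_mul, mul_one, smul_eq_mul]
    exact ENNReal.inv_mul_cancel hNne hNtop
  -- singleton masses
  have hμsing : ∀ r (j : J),
      μ r {z j} = ((Finset.univ.filter (fun q : Q => Φ (q, r) = j)).card : ℝ≥0∞) / N := by
    intro r j
    rw [hμ r, Measure.smul_apply, Measure.finset_sum_apply, smul_eq_mul]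
    have : ∀ q : Q, Measure.dirac (z (Φ (q, r))) ({z j} : Set X)
        = if Φ (q, r) = j then 1 else 0 := by
      intro q
      rw [Measure.dirac_apply' _ (measurableSet_singleton _)]
      by_cases h : Φ (q, r) = j
      · simp [h]
      · have : z (Φ (q, r)) ∉ ({z j} : Set X) := by
          simp only [Set.mem_singleton_iff]
          exact fun hz => h (hzinj hz)
        rw [Set.indicator_of_notMem this, if_neg h]
    rw [Finset.sum_congr rfl fun q _ => this q, Finset.sum_boole]
    rw [ENNReal.div_eq_inv_mul]
  -- mass outside the range is 0
  have hmarg0 : ∀ r, μ r ((Set.range fun q : Q => z (Φ (q, r)))ᶜ) = 0 := by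
    intro r
    rw [hμ r, Measure.smul_apply, Measure.finset_sum_apply]
    have hms : MeasurableSet ((Set.range fun q : Q => z (Φ (q, r)))ᶜ) :=
      ((Set.finite_range _).measurableSet).compl
    have : ∀ q : Q, Measure.dirac (z (Φ (q, r)))
        ((Set.range fun q : Q => z (Φ (q, r)))ᶜ) = 0 := by
      intro q
      rw [Measure.dirac_apply' _ hms]
      have : z (Φ (q, r)) ∈ Set.range fun q : Q => z (Φ (q, r)) := ⟨q, rfl⟩
      simp [Set.indicator_of_notMem, this]
    simp [this]
  -- counting identity
  have hcount : ∑ j : J, (Finset.univ.filter (fun q : Q => Φ (q, p) = j)).card *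
      (Finset.univ.filter (fun q : Q => Φ (q, p') = j)).card
      = (Finset.univ.filter (fun qq' : Q × Q => Φ (qq'.1, p) = Φ (qq'.2, p'))).card := by
    rw [Finset.card_eq_sum_card_fiberwise
      (f := fun qq' : Q × Q => Φ (qq'.1, p)) (t := Finset.univ) (fun _ _ => Finset.mem_univ _)]
    refine Finset.sum_congr rfl fun j _ => ?_
    rw [Finset.filter_filter]
    have hset : (Finset.univ.filter
        (fun qq' : Q × Q => Φ (qq'.1, p) = Φ (qq'.2, p') ∧ Φ (qq'.1, p) = j))
        = (Finset.univ.filter (fun q : Q => Φ (q, p) = j)) ×ˢ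
          (Finset.univ.filter (fun q : Q => Φ (q, p') = j)) := by
      ext qq'
      simp only [Finset.mem_filter, Finset.mem_univ, true_and, Finset.mem_product]
      constructor
      · rintro ⟨h1, h2⟩; exact ⟨h2, by rw [← h1, h2]⟩
      · rintro ⟨h1, h2⟩; exact ⟨h1.trans h2.symm, h1⟩
    rw [hset, Finset.card_product]
  -- min count bound
  have hminsum : 4 * ∑ j : J, min (Finset.univ.filter (fun q : Q => Φ (q, p) = j)).card
      (Finset.univ.filter (fun q : Q => Φ (q, p') = j)).card ≤ 3 * N := by
    have h1 : ∑ j : J, min (Finset.univ.filter (fun q : Q => Φ (q, p) = j)).card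
        (Finset.univ.filter (fun q : Q => Φ (q, p') = j)).card
        ≤ ∑ j : J, (Finset.univ.filter (fun q : Q => Φ (q, p) = j)).card *
          (Finset.univ.filter (fun q : Q => Φ (q, p') = j)).card := by
      refine Finset.sum_le_sum fun j _ => ?_
      rcases Nat.eq_zero_or_pos (Finset.univ.filter (fun q : Q => Φ (q, p') = j)).card with h | h
      · simp [h]
      · exact le_trans (min_le_left _ _) (Nat.le_mul_of_pos_right _ h)
    have h2 := hΦ p p' hpp'
    rw [hcount] at h1
    omega
  haveI hprob : ∀ r, IsProbabilityMeasure (μ r) := fun r => ⟨hμuniv r⟩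
  -- key lower bound for any coupling
  have key : ∀ π : Measure (X × X), π.map Prod.fst = μ p → π.map Prod.snd = μ p' →
      1 / (4 * k) ≤ ∫ pr, dist pr.1 pr.2 ∂π := by
    intro π hfst hsnd
    have hfst' : ∀ s : Set X, MeasurableSet s → π (Prod.fst ⁻¹' s) = μ p s := by
      intro s hs; rw [← hfst, Measure.map_apply measurable_fst hs]
    have hsnd' : ∀ s : Set X, MeasurableSet s → π (Prod.snd ⁻¹' s) = μ p' s := by
      intro s hs; rw [← hsnd, Measure.map_apply measurable_snd hs]
    have hπuniv : π Set.univ = 1 := by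
      have := hfst' Set.univ MeasurableSet.univ
      simpa [hμuniv] using this
    haveI : IsProbabilityMeasure π := ⟨hπuniv⟩
    set S1 : Set X := Set.range fun q : Q => z (Φ (q, p)) with hS1
    set S2 : Set X := Set.range fun q : Q => z (Φ (q, p')) with hS2
    set T : Set (X × X) := S1 ×ˢ S2 with hT
    set D : Set (X × X) := ⋃ j : J, ({z j} ×ˢ {z j} : Set (X × X)) with hD
    set B : Set (X × X) := T \ D with hBdef
    have hS1m : MeasurableSet S1 := (Set.finite_range _).measurableSet
    have hS2m : MeasurableSet S2 := (Set.finite_range _).measurableSet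
    have hDm : MeasurableSet D := MeasurableSet.iUnion fun j =>
      (measurableSet_singleton _).prod (measurableSet_singleton _)
    have hBm : MeasurableSet B := (hS1m.prod hS2m).diff hDm
    -- π Tᶜ = 0
    have hTc : π Tᶜ = 0 := by
      have hsub : Tᶜ ⊆ (Prod.fst ⁻¹' S1ᶜ) ∪ (Prod.snd ⁻¹' S2ᶜ) := by
        intro pr hpr
        by_contra h
        simp only [Set.mem_union, Set.mem_preimage, Set.mem_compl_iff, not_or, not_not] at h
        exact hpr ⟨h.1, h.2⟩
      refine measure_mono_null hsub ?_
      refine measure_union_null ?_ ?_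
      · rw [hfst' _ hS1m.compl]; exact hmarg0 p
      · rw [hsnd' _ hS2m.compl]; exact hmarg0 p'
    have hTone : (1 : ℝ≥0∞) ≤ π T := by
      have : π Set.univ ≤ π T + π Tᶜ := by
        rw [← Set.union_compl_self T] ; exact measure_union_le _ _
      rw [hπuniv, hTc, add_zero] at this
      exact this
    -- π D ≤ 3/4
    have hDle : π D ≤ 3 / 4 := by
      have hstep : π D ≤ ∑ j : J, π ({z j} ×ˢ {z j} : Set (X × X)) := by
        refine (measure_iUnion_le _).trans ?_
        rw [tsum_fintype]
      have hterm : ∀ j : J, π ({z j} ×ˢ {z j} : Set (X × X))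
          ≤ ((min (Finset.univ.filter (fun q : Q => Φ (q, p) = j)).card
            (Finset.univ.filter (fun q : Q => Φ (q, p') = j)).card : ℕ) : ℝ≥0∞) / N := by
        intro j
        rcases le_total (Finset.univ.filter (fun q : Q => Φ (q, p) = j)).card
          (Finset.univ.filter (fun q : Q => Φ (q, p') = j)).card with h | h
        · have hsub : ({z j} ×ˢ {z j} : Set (X × X)) ⊆ Prod.fst ⁻¹' {z j} := by
            intro pr hpr; exact hpr.1
          calc π ({z j} ×ˢ {z j} : Set (X × X)) ≤ π (Prod.fst ⁻¹' {z j}) := measure_mono hsub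
            _ = μ p {z j} := hfst' _ (measurableSet_singleton _)
            _ = _ := by rw [hμsing p j, min_eq_left h]
        · have hsub : ({z j} ×ˢ {z j} : Set (X × X)) ⊆ Prod.snd ⁻¹' {z j} := by
            intro pr hpr; exact hpr.2
          calc π ({z j} ×ˢ {z j} : Set (X × X)) ≤ π (Prod.snd ⁻¹' {z j}) := measure_mono hsub
            _ = μ p' {z j} := hsnd' _ (measurableSet_singleton _)
            _ = _ := by rw [hμsing p' j, min_eq_right h]
      have hsum : ∑ j : J, π ({z j} ×ˢ {z j} : Set (X × X))
          ≤ ((∑ j : J, min (Finset.univ.filter (fun q : Q => Φ (q, p) = j)).card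
            (Finset.univ.filter (fun q : Q => Φ (q, p') = j)).card : ℕ) : ℝ≥0∞) / N := by
        push_cast
        simp only [ENNReal.div_eq_inv_mul]
        rw [Finset.mul_sum]
        refine Finset.sum_le_sum fun j _ => ?_
        rw [← ENNReal.div_eq_inv_mul]
        exact hterm j
      refine hstep.trans (hsum.trans ?_)
      rw [ENNReal.div_le_iff hNne hNtop]
      calc ((∑ j : J, min (Finset.univ.filter (fun q : Q => Φ (q, p) = j)).card
            (Finset.univ.filter (fun q : Q => Φ (q, p') = j)).card : ℕ) : ℝ≥0∞)
          = ((4 * ∑ j : J, min (Finset.univ.filter (fun q : Q => Φ (q, p) = j)).card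
            (Finset.univ.filter (fun q : Q => Φ (q, p') = j)).card : ℕ) : ℝ≥0∞) / 4 := by
            push_cast
            rw [mul_comm, mul_div_assoc]
            rw [ENNReal.div_self (by norm_num) (by norm_num), mul_one]
        _ ≤ ((3 * N : ℕ) : ℝ≥0∞) / 4 :=
            ENNReal.div_le_div_right (by exact_mod_cast hminsum) 4
        _ = 3 / 4 * N := by
            push_cast
            rw [mul_comm 3 (N : ℝ≥0∞), mul_div_assoc, mul_comm]
    -- π B ≥ 1/4
    have hBquarter : (1 / 4 : ℝ≥0∞) ≤ π B := by
      by_contra hcon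
      push_neg at hcon
      have hsplit : π T ≤ π B + π D := by
        refine (measure_mono ?_).trans (measure_union_le _ _)
        intro pr hpr
        by_cases h : pr ∈ D
        · exact Set.mem_union_right _ h
        · exact Set.mem_union_left _ ⟨hpr, h⟩
      have hlt : π B + π D < 1 / 4 + 3 / 4 :=
        ENNReal.add_lt_add_of_lt_of_le (by norm_num) hcon hDle
      have : (1 / 4 + 3 / 4 : ℝ≥0∞) = 1 := by
        rw [ENNReal.div_add_div_same]
        norm_num
        rw [ENNReal.div_self (by norm_num) (by norm_num)]
      rw [this] at hlt
      exact absurd (hTone.trans hsplit) (not_le.mpr hlt)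
    -- a.e. membership in T
    have haeT : ∀ᵐ pr ∂π, pr ∈ T := by
      rw [ae_iff]
      exact hTc
    -- pointwise bound
    have hle : ∀ᵐ pr ∂π, B.indicator (fun _ => 1 / k) pr ≤ dist pr.1 pr.2 := by
      filter_upwards [haeT] with pr hpr
      by_cases hB : pr ∈ B
      · rw [Set.indicator_of_mem hB]
        obtain ⟨⟨q, hq⟩, ⟨q', hq'⟩⟩ := hpr
        have hq1 : z (Φ (q, p)) = pr.1 := hq
        have hq'1 : z (Φ (q', p')) = pr.2 := hq'
        have hne : Φ (q, p) ≠ Φ (q', p') := by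
          intro h
          refine hB.2 (Set.mem_iUnion.mpr ⟨Φ (q, p), Set.mem_prod.mpr ⟨?_, ?_⟩⟩)
          · exact Set.mem_singleton_iff.mpr hq1.symm
          · rw [h]; exact Set.mem_singleton_iff.mpr hq'1.symm
        calc 1 / k ≤ dist (z (Φ (q, p))) (z (Φ (q', p'))) := hsep _ _ hne
          _ = dist pr.1 pr.2 := by rw [hq1, hq'1]
      · rw [Set.indicator_of_notMem hB]
        exact dist_nonneg
    -- integrability of dist
    have hgmem : Integrable (fun pr : X × X => ∑ ij : J × J,
        (({z ij.1} ×ˢ {z ij.2} : Set (X × X)).indicator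
          (fun _ => dist (z ij.1) (z ij.2))) pr) π := by
      refine integrable_finset_sum _ fun ij _ => ?_
      exact (integrable_const _).indicator
        ((measurableSet_singleton _).prod (measurableSet_singleton _))
    have hdisteq : (fun pr : X × X => ∑ ij : J × J,
        (({z ij.1} ×ˢ {z ij.2} : Set (X × X)).indicator
          (fun _ => dist (z ij.1) (z ij.2))) pr) =ᵐ[π] fun pr => dist pr.1 pr.2 := by
      filter_upwards [haeT] with pr hpr
      obtain ⟨⟨q, hq⟩, ⟨q', hq'⟩⟩ := hpr
      have hq1 : z (Φ (q, p)) = pr.1 := hq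
      have hq'1 : z (Φ (q', p')) = pr.2 := hq'
      rw [Finset.sum_eq_single (Φ (q, p), Φ (q', p'))]
      · rw [Set.indicator_of_mem (Set.mem_prod.mpr
          ⟨Set.mem_singleton_iff.mpr hq1.symm, Set.mem_singleton_iff.mpr hq'1.symm⟩), hq1, hq'1]
      · intro ij _ hij
        refine Set.indicator_of_notMem ?_ _
        rintro ⟨h1, h2⟩
        apply hij
        have h1' : pr.1 = z ij.1 := h1
        have h2' : pr.2 = z ij.2 := h2
        have e1 : ij.1 = Φ (q, p) := (hzinj (hq1.trans h1')).symm
        have e2 : ij.2 = Φ (q', p') := (hzinj (hq'1.trans h2')).symm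
        rw [Prod.ext_iff]; exact ⟨e1, e2⟩
      · intro h; exact absurd (Finset.mem_univ _) h
    have hdistint : Integrable (fun pr : X × X => dist pr.1 pr.2) π :=
      hgmem.congr hdisteq
    -- final calculation
    have hBfin : π B ≠ ⊤ := (measure_lt_top π B).ne
    have htr : (1 / 4 : ℝ) ≤ (π B).toReal := by
      have := ENNReal.toReal_mono hBfin hBquarter
      simpa using this
    calc 1 / (4 * k) = (1 / 4 : ℝ) * (1 / k) := by
          rw [div_mul_eq_div_div]
          ring
      _ ≤ (π B).toReal * (1 / k) := by
          have h1k : (0:ℝ) ≤ 1 / k := by positivity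
          exact mul_le_mul_of_nonneg_right htr h1k
      _ = ∫ pr, B.indicator (fun _ => (1 / k : ℝ)) pr ∂π := by
          rw [integral_indicator_const _ hBm, smul_eq_mul, measureReal_def]
      _ ≤ ∫ pr, dist pr.1 pr.2 ∂π := by
          refine integral_mono_of_nonneg ?_ hdistint hle
          exact Filter.Eventually.of_forall fun pr =>
            Set.indicator_nonneg (fun _ _ => by positivity) _
  -- nonemptiness of the transport set and conclusion
  haveI := hprob p
  haveI := hprob p'
  unfold kwDist
  refine le_csInf ⟨∫ pr, dist pr.1 pr.2 ∂((μ p).prod (μ p')), (μ p).prod (μ p'), ?_, ?_, rfl⟩ ?_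
  · rw [Measure.map_fst_prod]
    simp
  · rw [Measure.map_snd_prod]
    simp
  · rintro c ⟨π, h1, h2, rfl⟩
    exact key π h1 h2
end

section
/- The covering-number heuristic for maximal emergence: for the cube [0,1]^{d}, the minimal number N(ε) of ε-balls (in Kantorovich–Wasserstein distance) needed to cover the space of probability measures satisfies log log N(ε) ≥ −(d − δ) log ε for every δ > 0 and all small ε; equivalently, there exist at least exp(c ε^{−d'}) probability measures that are pairwise ε-separated, for any d' < d. -/
open MeasureTheory ENNReal

lemma sum_choose_le (n r : ℕ) (hr : r ≤ n) :
    (∑ i ∈ Finset.range (r+1), n.choose i) * 3^(n-r) ≤ 4^n := by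
  have h4 : (4:ℕ)^n = ∑ i ∈ Finset.range (n+1), 3^(n-i) * n.choose i := by
    have h := add_pow (1:ℕ) 3 n
    norm_num at h
    rw [show (4:ℕ) = 1+3 by norm_num, h]
  rw [Finset.sum_mul]
  calc ∑ i ∈ Finset.range (r+1), n.choose i * 3^(n-r)
      ≤ ∑ i ∈ Finset.range (r+1), 3^(n-i) * n.choose i := by
        refine Finset.sum_le_sum fun i hi => ?_
        simp only [Finset.mem_range] at hi
        calc n.choose i * 3^(n-r) ≤ n.choose i * 3^(n-i) :=
              mul_le_mul_right (Nat.pow_le_pow_right (by norm_num) (by omega)) _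
          _ = 3^(n-i) * n.choose i := mul_comm _ _
    _ ≤ ∑ i ∈ Finset.range (n+1), 3^(n-i) * n.choose i :=
        Finset.sum_le_sum_of_subset (Finset.range_subset_range.mpr (by omega))
    _ = 4^n := h4.symm

lemma pow98 (n : ℕ) (hn : 250 ≤ n) : 3*(n+1)^4 * 8^n ≤ 9^n := by
  induction n, hn using Nat.le_induction with
  | base => norm_num
  | succ n hn ih =>
      have key : 8*(3*(n+1+1)^4) ≤ 9*(3*(n+1)^4) := by
        have b : 250*n^3 ≤ n*n^3 := Nat.mul_le_mul_right _ hn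
        have c : 250*n^2 ≤ n*n^2 := Nat.mul_le_mul_right _ hn
        have e : 250*n ≤ n*n := Nat.mul_le_mul_right _ hn
        nlinarith [hn, b, c, e]
      calc 3*(n+1+1)^4*8^(n+1) = (8*(3*(n+1+1)^4))*8^n := by ring
        _ ≤ (9*(3*(n+1)^4))*8^n := mul_le_mul_left key _
        _ = 9*(3*(n+1)^4*8^n) := by ring
        _ ≤ 9*9^n := mul_le_mul_right ih _
        _ = 9^(n+1) := by ring

lemma exists_code (ι : Type*) [Fintype ι] [DecidableEq ι] :
    ∃ F : Finset (Finset ι),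
      (∀ A ∈ F, A.card = (Fintype.card ι + 1)/2) ∧
      (∀ A ∈ F, ∀ B ∈ F, A ≠ B → 4 * (A ∩ B).card ≤ 3 * ((Fintype.card ι + 1)/2)) ∧
      2^(Fintype.card ι) * 3^(Fintype.card ι - (Fintype.card ι + 1)/4)
        ≤ (Fintype.card ι + 1) * F.card * 4^(Fintype.card ι) := by
  classical
  obtain ⟨n, hn⟩ : ∃ m, Fintype.card ι = m := ⟨_, rfl⟩
  rw [hn]
  set h := (n+1)/2 with hh
  set r := (n+1)/4 with hr
  -- property
  set P : Finset (Finset ι) → Prop := fun F =>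
    (∀ A ∈ F, A.card = h) ∧ (∀ A ∈ F, ∀ B ∈ F, A ≠ B → 4 * (A ∩ B).card ≤ 3 * h)
    with hP
  -- maximal family
  obtain ⟨F, hF, hFmax⟩ := Finset.exists_max_image
    ((Finset.univ : Finset (Finset (Finset ι))).filter P) Finset.card
    ⟨∅, by simp [hP]⟩
  rw [Finset.mem_filter] at hF
  obtain ⟨-, hF1, hF2⟩ := hF
  refine ⟨F, hF1, hF2, ?_⟩
  -- covering: every B of card h is in a ball around some A ∈ F
  have cover : ∀ B : Finset ι, B.card = h → ∃ A ∈ F,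
      ((A \ B) ∪ (B \ A)).card ≤ r := by
    intro B hBcard
    by_cases hBF : B ∈ F
    · exact ⟨B, hBF, by simp⟩
    · -- insert B F fails P, else contradict maximality
      have hPB : ¬ P (insert B F) := by
        intro hPB
        have := hFmax (insert B F) (Finset.mem_filter.mpr ⟨Finset.mem_univ _, hPB⟩)
        rw [Finset.card_insert_of_notMem hBF] at this
        omega
      simp only [hP] at hPB
      push_neg at hPB
      have hall : ∀ A ∈ insert B F, A.card = h := by
        intro A hA
        rcases Finset.mem_insert.mp hA with rfl | hA
        exacts [hBcard, hF1 A hA]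
      obtain ⟨A₁, hA₁, A₂, hA₂, hne, hbad⟩ := hPB hall
      rcases Finset.mem_insert.mp hA₁ with rfl | hA₁' <;>
        rcases Finset.mem_insert.mp hA₂ with rfl | hA₂'
      · exact absurd rfl hne
      · -- A₁ = B, A₂ ∈ F
        refine ⟨A₂, hA₂', ?_⟩
        have h1 : (A₂ \ A₁).card + (A₂ ∩ A₁).card = A₂.card :=
          Finset.card_sdiff_add_card_inter _ _
        have h2 : (A₁ \ A₂).card + (A₁ ∩ A₂).card = A₁.card :=
          Finset.card_sdiff_add_card_inter _ _
        have h3 : ((A₂ \ A₁) ∪ (A₁ \ A₂)).card = (A₂ \ A₁).card + (A₁ \ A₂).card :=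
          Finset.card_union_of_disjoint disjoint_sdiff_sdiff
        have h4 : (A₁ ∩ A₂).card = (A₂ ∩ A₁).card := by rw [Finset.inter_comm]
        have h5 : A₂.card = h := hF1 A₂ hA₂'
        omega
      · refine ⟨A₁, hA₁', ?_⟩
        have h1 : (A₁ \ A₂).card + (A₁ ∩ A₂).card = A₁.card :=
          Finset.card_sdiff_add_card_inter _ _
        have h2 : (A₂ \ A₁).card + (A₂ ∩ A₁).card = A₂.card :=
          Finset.card_sdiff_add_card_inter _ _
        have h3 : ((A₁ \ A₂) ∪ (A₂ \ A₁)).card = (A₁ \ A₂).card + (A₂ \ A₁).card :=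
          Finset.card_union_of_disjoint disjoint_sdiff_sdiff
        have h4 : (A₂ ∩ A₁).card = (A₁ ∩ A₂).card := by rw [Finset.inter_comm]
        have h5 : A₁.card = h := hF1 A₁ hA₁'
        omega
      · exact absurd (hF2 A₁ hA₁' A₂ hA₂' hne) (by omega)
  -- counting
  have hV : ∀ A : Finset ι,
      ((Finset.univ : Finset (Finset ι)).filter
        (fun B => ((A \ B) ∪ (B \ A)).card ≤ r)).card
      ≤ ∑ i ∈ Finset.range (r+1), n.choose i := by
    intro A
    set f : Finset ι → Finset ι := fun B => (A \ B) ∪ (B \ A) with hf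
    set ball := (Finset.univ : Finset (Finset ι)).filter (fun B => (f B).card ≤ r)
      with hball
    have hinj : Set.InjOn f ↑ball := by
      intro B₁ _ B₂ _ hEq
      have h1 : symmDiff A B₁ = symmDiff A B₂ := by
        simpa [symmDiff_def, Finset.sup_eq_union, hf] using hEq
      have h2 := congrArg (fun C => symmDiff A C) h1
      simpa [symmDiff_symmDiff_cancel_left] using h2
    have himg : ball.image f ⊆
        (Finset.range (r+1)).biUnion (fun i => Finset.univ.powersetCard i) := by
      intro C hC
      simp only [Finset.mem_image] at hC
      obtain ⟨B, hB, rfl⟩ := hC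
      rw [hball, Finset.mem_filter] at hB
      refine Finset.mem_biUnion.mpr ⟨(f B).card, Finset.mem_range.mpr (by omega), ?_⟩
      simp [Finset.mem_powersetCard_univ]
    calc ball.card = (ball.image f).card := (Finset.card_image_of_injOn hinj).symm
      _ ≤ ((Finset.range (r+1)).biUnion (fun i => Finset.univ.powersetCard i)).card :=
          Finset.card_le_card himg
      _ ≤ ∑ i ∈ Finset.range (r+1),
            (Finset.univ.powersetCard i : Finset (Finset ι)).card :=
          Finset.card_biUnion_le
      _ = ∑ i ∈ Finset.range (r+1), n.choose i := by
          refine Finset.sum_congr rfl fun i _ => ?_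
          rw [Finset.card_powersetCard, Finset.card_univ, hn]
  -- central binomial lower bound
  have heq : n.choose (n/2) = n.choose h := by
    rcases Nat.eq_zero_or_pos n with rfl | hn0
    · show Nat.choose 0 (0/2) = Nat.choose 0 ((0+1)/2)
      norm_num
    · have hd : n - h = n/2 := by omega
      rw [← hd, Nat.choose_symm (by omega)]
  have hmid : 2^n ≤ (n+1) * n.choose h := by
    calc 2^n = ∑ i ∈ Finset.range (n+1), n.choose i := (Nat.sum_range_choose n).symm
      _ ≤ ∑ _i ∈ Finset.range (n+1), n.choose (n/2) :=
          Finset.sum_le_sum fun i _ => Nat.choose_le_middle i n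
      _ = (n+1) * n.choose (n/2) := by
          rw [Finset.sum_const, Finset.card_range, smul_eq_mul]
      _ = (n+1) * n.choose h := by rw [heq]
  -- all size-h subsets covered by balls
  have hcov : (Finset.univ.powersetCard h : Finset (Finset ι)) ⊆
      F.biUnion (fun A => (Finset.univ : Finset (Finset ι)).filter
        (fun B => ((A \ B) ∪ (B \ A)).card ≤ r)) := by
    intro B hB
    rw [Finset.mem_powersetCard_univ] at hB
    obtain ⟨A, hA, hAB⟩ := cover B hB
    exact Finset.mem_biUnion.mpr ⟨A, hA, Finset.mem_filter.mpr ⟨Finset.mem_univ _, hAB⟩⟩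
  have hcount : n.choose h ≤ F.card * ∑ i ∈ Finset.range (r+1), n.choose i := by
    calc n.choose h = (Finset.univ.powersetCard h : Finset (Finset ι)).card := by
          rw [Finset.card_powersetCard, Finset.card_univ, hn]
      _ ≤ (F.biUnion _).card := Finset.card_le_card hcov
      _ ≤ ∑ A ∈ F, ((Finset.univ : Finset (Finset ι)).filter
            (fun B => ((A \ B) ∪ (B \ A)).card ≤ r)).card := Finset.card_biUnion_le
      _ ≤ ∑ _A ∈ F, ∑ i ∈ Finset.range (r+1), n.choose i :=
          Finset.sum_le_sum fun A _ => hV A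
      _ = F.card * ∑ i ∈ Finset.range (r+1), n.choose i := by
          rw [Finset.sum_const, smul_eq_mul]
  -- assemble
  have hball : (∑ i ∈ Finset.range (r+1), n.choose i) * 3^(n-r) ≤ 4^n :=
    sum_choose_le n r (by omega)
  calc 2^n * 3^(n-r) ≤ ((n+1) * n.choose h) * 3^(n-r) :=
        mul_le_mul_left hmid _
    _ ≤ ((n+1) * (F.card * ∑ i ∈ Finset.range (r+1), n.choose i)) * 3^(n-r) :=
        mul_le_mul_left (mul_le_mul_right hcount _) _
    _ = (n+1) * F.card * ((∑ i ∈ Finset.range (r+1), n.choose i) * 3^(n-r)) := by ring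
    _ ≤ (n+1) * F.card * 4^n := mul_le_mul_right hball _


noncomputable def gridPt (d k : ℕ) (a : Fin d → Fin k) : Fin d → ℝ :=
  fun j => ((a j : ℝ) + 1/2) / k

noncomputable def uMeas (d k : ℕ) (A : Finset (Fin d → Fin k)) :
    Measure (Fin d → ℝ) :=
  (A.card : ℝ≥0∞)⁻¹ • ∑ a ∈ A, Measure.dirac (gridPt d k a)

lemma gridPt_injective (d k : ℕ) (hk : 1 ≤ k) :
    Function.Injective (gridPt d k) := by
  intro a b hab
  funext j
  have h := congrFun hab j
  simp only [gridPt] at h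
  have hk' : (k:ℝ) ≠ 0 := by positivity
  have h2 : ((a j : ℕ) : ℝ) = ((b j : ℕ) : ℝ) := by
    field_simp at h; linarith
  exact Fin.val_injective (by exact_mod_cast h2)

lemma gridPt_dist (d k : ℕ) (hk : 1 ≤ k) {a b : Fin d → Fin k} (hab : a ≠ b) :
    1 / (k:ℝ) ≤ dist (gridPt d k a) (gridPt d k b) := by
  obtain ⟨j, hj⟩ := Function.ne_iff.mp hab
  have hk0 : (0:ℝ) < k := by positivity
  have h1 : (1:ℝ) ≤ |(a j : ℝ) - (b j : ℝ)| := by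
    have hne : ((a j : ℕ) : ℤ) ≠ ((b j : ℕ) : ℤ) :=
      fun hc => hj (Fin.val_injective (by exact_mod_cast hc))
    have h2 : 1 ≤ |((a j : ℕ) : ℤ) - ((b j : ℕ) : ℤ)| :=
      Int.one_le_abs (sub_ne_zero.mpr hne)
    calc (1:ℝ) = ((1:ℤ):ℝ) := by norm_num
      _ ≤ ((|((a j : ℕ) : ℤ) - ((b j : ℕ) : ℤ)| : ℤ) : ℝ) := by exact_mod_cast h2
      _ = |(a j : ℝ) - (b j : ℝ)| := by rw [Int.cast_abs]; norm_cast
  calc 1/(k:ℝ) = 1/(k:ℝ) * 1 := by ring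
    _ ≤ 1/(k:ℝ) * |(a j : ℝ) - (b j : ℝ)| := by
        apply mul_le_mul_of_nonneg_left h1 (by positivity)
    _ = |((a j : ℝ) + 1/2)/k - ((b j : ℝ) + 1/2)/k| := by
        rw [div_sub_div_same]
        rw [show ((a j : ℝ) + 1/2) - ((b j : ℝ) + 1/2) = (a j : ℝ) - b j by ring]
        rw [abs_div, abs_of_pos hk0]
        ring
    _ = dist (gridPt d k a j) (gridPt d k b j) := by
        rw [Real.dist_eq]; rfl
    _ ≤ dist (gridPt d k a) (gridPt d k b) := dist_le_pi_dist _ _ j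

def cube (d : ℕ) : Set (Fin d → ℝ) := {x | ∀ j, x j ∈ Set.Icc (0:ℝ) 1}

lemma gridPt_mem_cube (d k : ℕ) (hk : 1 ≤ k) (a : Fin d → Fin k) :
    gridPt d k a ∈ cube d := by
  intro j
  simp only [gridPt]
  have hk0 : (0:ℝ) < k := by exact_mod_cast hk
  have hval : ((a j : ℕ) : ℝ) ≤ (k:ℝ) - 1 := by
    have := (a j).isLt
    have : ((a j : ℕ) : ℝ) ≤ ((k:ℕ):ℝ) - 1 := by exact_mod_cast Nat.le_sub_one_of_lt this
    simpa using this
  constructor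
  · apply div_nonneg _ hk0.le
    positivity
  · rw [div_le_one hk0]
    have : ((a j : ℕ) : ℝ) + 1/2 ≤ (k:ℝ) - 1 + 1/2 := by linarith
    linarith

lemma cube_dist_le (d : ℕ) {x y : Fin d → ℝ} (hx : x ∈ cube d) (hy : y ∈ cube d) :
    dist x y ≤ 1 := by
  rw [dist_pi_le_iff (by norm_num)]
  intro j
  rw [Real.dist_eq]
  have h1 := hx j
  have h2 := hy j
  rw [abs_le]
  constructor <;> [skip; skip] <;>
    simp only [Set.mem_Icc] at h1 h2 <;> linarith [h1.1, h1.2, h2.1, h2.2]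

lemma uMeas_apply_null (d k : ℕ) (A : Finset (Fin d → Fin k)) (s : Set (Fin d → ℝ))
    (hs : ∀ a ∈ A, gridPt d k a ∉ s) : uMeas d k A s = 0 := by
  simp only [uMeas, Measure.smul_apply, smul_eq_mul]
  have : ((∑ a ∈ A, Measure.dirac (gridPt d k a)) : Measure (Fin d → ℝ)) s = 0 := by
    rw [MeasureTheory.Measure.coe_finset_sum]
    simp only [Finset.sum_apply]
    refine Finset.sum_eq_zero fun a ha => ?_
    rw [MeasureTheory.Measure.dirac_apply]
    simp [Set.indicator_of_notMem (hs a ha)]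
  rw [this, mul_zero]

lemma uMeas_prob (d k : ℕ) (A : Finset (Fin d → Fin k)) (hA : A.card ≠ 0) :
    IsProbabilityMeasure (uMeas d k A) := by
  constructor
  simp only [uMeas, Measure.smul_apply, smul_eq_mul]
  rw [MeasureTheory.Measure.coe_finset_sum]
  simp only [Finset.sum_apply, MeasureTheory.Measure.dirac_apply, Set.indicator_univ,
    Pi.one_apply, Finset.sum_const, nsmul_eq_mul, mul_one]
  exact ENNReal.inv_mul_cancel (by exact_mod_cast hA) (by simp)

lemma uMeas_singleton_le (d k : ℕ) (hk : 1 ≤ k) (A : Finset (Fin d → Fin k))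
    (x : Fin d → ℝ) : uMeas d k A {x} ≤ (A.card : ℝ≥0∞)⁻¹ := by
  simp only [uMeas, Measure.smul_apply, smul_eq_mul]
  rw [MeasureTheory.Measure.coe_finset_sum]
  simp only [Finset.sum_apply, MeasureTheory.Measure.dirac_apply]
  rcases eq_or_ne A ∅ with rfl | hA
  · simp
  by_cases hx : ∃ a ∈ A, gridPt d k a = x
  · obtain ⟨a₀, ha₀, rfl⟩ := hx
    have : ∑ a ∈ A, ({gridPt d k a₀} : Set (Fin d → ℝ)).indicator (1 : (Fin d → ℝ) → ℝ≥0∞) (gridPt d k a) ≤ 1 := by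
      rw [Finset.sum_eq_single_of_mem a₀ ha₀]
      · simp
      · intro b hb hba
        apply Set.indicator_of_notMem
        simp only [Set.mem_singleton_iff]
        exact fun hc => hba (gridPt_injective d k hk hc)
    calc (A.card : ℝ≥0∞)⁻¹ * ∑ a ∈ A, ({gridPt d k a₀} : Set (Fin d → ℝ)).indicator (1 : (Fin d → ℝ) → ℝ≥0∞) (gridPt d k a)
        ≤ (A.card : ℝ≥0∞)⁻¹ * 1 := mul_le_mul_right this ((A.card : ℝ≥0∞)⁻¹)
      _ = (A.card : ℝ≥0∞)⁻¹ := mul_one _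
  · push_neg at hx
    have : ∑ a ∈ A, ({x} : Set (Fin d → ℝ)).indicator (1 : (Fin d → ℝ) → ℝ≥0∞) (gridPt d k a) = 0 := by
      refine Finset.sum_eq_zero fun a ha => ?_
      apply Set.indicator_of_notMem
      simpa using hx a ha
    rw [this, mul_zero]
    exact zero_le

lemma aux_div (c h : ℕ) (hh : h ≠ 0) (hc : 4*c ≤ 3*h) :
    ((c:ℝ≥0∞)) * ((h:ℝ≥0∞))⁻¹ ≤ 3/4 := by
  rw [← div_eq_mul_inv, ENNReal.div_le_iff (by exact_mod_cast hh) (by simp)]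
  have h1 : (3:ℝ≥0∞)/4*(h:ℝ≥0∞) = (3*h)/4 := by
    simp [div_eq_mul_inv, mul_comm, mul_assoc, mul_left_comm]
  rw [h1, ENNReal.le_div_iff_mul_le (Or.inl (by norm_num)) (Or.inl (by norm_num))]
  calc (c:ℝ≥0∞)*4 = ((c*4 : ℕ):ℝ≥0∞) := by push_cast; ring
    _ ≤ ((3*h : ℕ):ℝ≥0∞) := Nat.cast_le.mpr (by omega)
    _ = 3*(h:ℝ≥0∞) := by push_cast; ring

lemma kw_lower (d k : ℕ) (hk : 1 ≤ k) (A B : Finset (Fin d → Fin k)) (h : ℕ)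
    (hh : h ≠ 0) (hA : A.card = h) (hB : B.card = h)
    (hAB : 4 * (A ∩ B).card ≤ 3 * h) :
    1 / (4 * (k:ℝ)) ≤ kwDist dist (uMeas d k A) (uMeas d k B) := by
  haveI hPA : IsProbabilityMeasure (uMeas d k A) := uMeas_prob _ _ _ (by omega)
  haveI hPB : IsProbabilityMeasure (uMeas d k B) := uMeas_prob _ _ _ (by omega)
  set SA : Finset (Fin d → ℝ) := A.image (gridPt d k) with hSA
  set SB : Finset (Fin d → ℝ) := B.image (gridPt d k) with hSB
  apply le_csInf
  · refine ⟨_, (uMeas d k A).prod (uMeas d k B), ?_, ?_, rfl⟩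
    · rw [Measure.map_fst_prod]; simp
    · rw [Measure.map_snd_prod]; simp
  rintro b ⟨π, hπ1, hπ2, rfl⟩
  have hπuniv : π Set.univ = 1 := by
    have h1 : π.map Prod.fst Set.univ = π Set.univ := by
      rw [Measure.map_apply measurable_fst MeasurableSet.univ, Set.preimage_univ]
    rw [← h1, hπ1, measure_univ]
  haveI : IsProbabilityMeasure π := ⟨hπuniv⟩
  have hmargA : ∀ s : Set (Fin d → ℝ), MeasurableSet s →
      π (Prod.fst ⁻¹' s) = uMeas d k A s := by
    intro s hs; rw [← hπ1, Measure.map_apply measurable_fst hs]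
  have hmargB : ∀ s : Set (Fin d → ℝ), MeasurableSet s →
      π (Prod.snd ⁻¹' s) = uMeas d k B s := by
    intro s hs; rw [← hπ2, Measure.map_apply measurable_snd hs]
  have hnullA : π (Prod.fst ⁻¹' (↑SA)ᶜ) = 0 := by
    rw [hmargA _ SA.finite_toSet.measurableSet.compl]
    refine uMeas_apply_null _ _ _ _ fun a ha => ?_
    simp only [Set.mem_compl_iff, not_not, Finset.mem_coe]
    exact Finset.mem_image_of_mem _ ha
  have hnullB : π (Prod.snd ⁻¹' (↑SB)ᶜ) = 0 := by
    rw [hmargB _ SB.finite_toSet.measurableSet.compl]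
    refine uMeas_apply_null _ _ _ _ fun a ha => ?_
    simp only [Set.mem_compl_iff, not_not, Finset.mem_coe]
    exact Finset.mem_image_of_mem _ ha
  set E : Set ((Fin d → ℝ) × (Fin d → ℝ)) :=
    {q | q.1 ∈ (SA : Set (Fin d → ℝ)) ∧ q.2 ∈ (SB : Set (Fin d → ℝ)) ∧ q.1 ≠ q.2}
    with hE
  have hEfin : E.Finite :=
    (SA.finite_toSet.prod SB.finite_toSet).subset fun q hq => ⟨hq.1, hq.2.1⟩
  have hEmeas : MeasurableSet E := hEfin.measurableSet
  have haeprod : ∀ᵐ q ∂π, q.1 ∈ (SA : Set (Fin d → ℝ)) ∧ q.2 ∈ (SB : Set (Fin d → ℝ)) := by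
    rw [MeasureTheory.ae_iff]
    refine measure_mono_null ?_ (measure_union_null hnullA hnullB)
    intro q hq
    rcases not_and_or.mp hq with h' | h'
    · exact Or.inl h'
    · exact Or.inr h'
  have hint : Integrable (fun q : (Fin d → ℝ) × (Fin d → ℝ) => dist q.1 q.2) π := by
    refine Integrable.mono' (integrable_const 1) continuous_dist.aestronglyMeasurable ?_
    filter_upwards [haeprod] with q hq
    rw [Real.norm_eq_abs, abs_of_nonneg dist_nonneg]
    obtain ⟨a, _, ha⟩ := Finset.mem_image.mp (Finset.mem_coe.mp hq.1)
    obtain ⟨b', _, hb⟩ := Finset.mem_image.mp (Finset.mem_coe.mp hq.2)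
    exact cube_dist_le d (ha ▸ gridPt_mem_cube d k hk a) (hb ▸ gridPt_mem_cube d k hk b')
  have hlow : ∀ q ∈ E, 1/(k:ℝ) ≤ dist q.1 q.2 := by
    rintro ⟨x, y⟩ ⟨hx, hy, hxy⟩
    obtain ⟨a, _, rfl⟩ := Finset.mem_image.mp (Finset.mem_coe.mp hx)
    obtain ⟨b', _, rfl⟩ := Finset.mem_image.mp (Finset.mem_coe.mp hy)
    exact gridPt_dist d k hk fun hcc => hxy (by rw [hcc])
  -- complement bound
  have hcompl : π Eᶜ ≤ 3/4 := by
    have hsub : Eᶜ ⊆ (Prod.fst ⁻¹' (↑SA)ᶜ) ∪ (Prod.snd ⁻¹' (↑SB)ᶜ) ∪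
        ⋃ a ∈ (A ∩ B), {(gridPt d k a, gridPt d k a)} := by
      rintro ⟨x, y⟩ hq
      simp only [hE, Set.mem_compl_iff, Set.mem_setOf_eq, not_and_or, not_not] at hq
      by_cases hx : x ∈ (SA : Set (Fin d → ℝ))
      · by_cases hy : y ∈ (SB : Set (Fin d → ℝ))
        · have hxy : x = y := by tauto
          subst hxy
          obtain ⟨a, haA, ha⟩ := Finset.mem_image.mp (Finset.mem_coe.mp hx)
          obtain ⟨b', hbB, hb⟩ := Finset.mem_image.mp (Finset.mem_coe.mp hy)
          have hab : a = b' := gridPt_injective d k hk (by rw [ha, hb])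
          refine Or.inr (Set.mem_biUnion (Finset.mem_inter.mpr ⟨haA, hab ▸ hbB⟩) ?_)
          simp [ha]
        · exact Or.inl (Or.inr hy)
      · exact Or.inl (Or.inl hx)
    calc π Eᶜ ≤ π ((Prod.fst ⁻¹' (↑SA)ᶜ) ∪ (Prod.snd ⁻¹' (↑SB)ᶜ) ∪
          ⋃ a ∈ (A ∩ B), {(gridPt d k a, gridPt d k a)}) := measure_mono hsub
      _ ≤ (π ((Prod.fst ⁻¹' (↑SA)ᶜ) ∪ (Prod.snd ⁻¹' (↑SB)ᶜ)) +
            π (⋃ a ∈ (A ∩ B), {(gridPt d k a, gridPt d k a)})) := measure_union_le _ _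
      _ ≤ ((π (Prod.fst ⁻¹' (↑SA)ᶜ) + π (Prod.snd ⁻¹' (↑SB)ᶜ)) +
            π (⋃ a ∈ (A ∩ B), {(gridPt d k a, gridPt d k a)})) :=
          add_le_add_left (measure_union_le _ _) _
      _ = π (⋃ a ∈ (A ∩ B), {(gridPt d k a, gridPt d k a)}) := by
          rw [hnullA, hnullB]; simp
      _ ≤ ∑ a ∈ (A ∩ B), π {(gridPt d k a, gridPt d k a)} :=
          measure_biUnion_finset_le _ _
      _ ≤ ∑ _a ∈ (A ∩ B), (h : ℝ≥0∞)⁻¹ := by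
          refine Finset.sum_le_sum fun a ha => ?_
          have hsub2 : ({(gridPt d k a, gridPt d k a)} :
              Set ((Fin d → ℝ) × (Fin d → ℝ))) ⊆ Prod.fst ⁻¹' {gridPt d k a} := by
            intro q hq; rw [Set.mem_singleton_iff] at hq; subst hq; rfl
          calc π {(gridPt d k a, gridPt d k a)} ≤ π (Prod.fst ⁻¹' {gridPt d k a}) :=
                measure_mono hsub2
            _ = uMeas d k A {gridPt d k a} := hmargA _ (measurableSet_singleton _)
            _ ≤ (A.card : ℝ≥0∞)⁻¹ := uMeas_singleton_le d k hk A _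
            _ = (h : ℝ≥0∞)⁻¹ := by rw [hA]
      _ = ((A ∩ B).card : ℝ≥0∞) * (h : ℝ≥0∞)⁻¹ := by
          rw [Finset.sum_const, nsmul_eq_mul]
      _ ≤ 3/4 := aux_div _ _ hh hAB
  -- measure of E at least 1/4
  have hEbig : (1/4 : ℝ≥0∞) ≤ π E := by
    have hadd := measure_add_measure_compl (μ := π) hEmeas
    rw [hπuniv] at hadd
    by_contra hcon
    push_neg at hcon
    have : π E + π Eᶜ < 1/4 + 3/4 :=
      ENNReal.add_lt_add_of_lt_of_le (by simp) hcon hcompl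
    rw [hadd] at this
    have h41 : (1/4 : ℝ≥0∞) + 3/4 = 1 := by
      rw [ENNReal.div_add_div_same]
      have h13 : (1+3 : ℝ≥0∞) = 4 := by norm_num
      rw [h13]
      exact ENNReal.div_self (by norm_num) (by norm_num)
    rw [h41] at this
    exact lt_irrefl _ this
  have hEreal : (1/4 : ℝ) ≤ (π E).toReal := by
    have := ENNReal.toReal_mono (measure_ne_top π E) hEbig
    simpa using this
  have hk0 : (0:ℝ) < k := by exact_mod_cast hk
  calc 1 / (4 * (k:ℝ)) = (1/(k:ℝ)) * (1/4) := by field_simp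
    _ ≤ (1/(k:ℝ)) * (π E).toReal := by
        apply mul_le_mul_of_nonneg_left hEreal (by positivity)
    _ ≤ ∫ q in E, dist q.1 q.2 ∂π := by
        have := MeasureTheory.setIntegral_ge_of_const_le hEmeas (measure_ne_top π E)
          hlow hint.integrableOn
        rw [smul_eq_mul, mul_comm] at this; exact this
    _ ≤ ∫ q, dist q.1 q.2 ∂π :=
        MeasureTheory.setIntegral_le_integral hint
          (Filter.Eventually.of_forall fun q => dist_nonneg)

lemma exp25 : Real.exp (2/5 : ℝ) ≤ 3/2 := by
  have h5 : (Real.exp (2/5 : ℝ))^5 = Real.exp 2 := by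
    rw [← Real.exp_nat_mul]
    norm_num
  have h2 : Real.exp 2 < 7.59375 := by
    have h1 : Real.exp 2 = (Real.exp 1)^2 := by
      rw [← Real.exp_nat_mul]; norm_num
    have := Real.exp_one_lt_d9
    rw [h1]
    nlinarith [Real.exp_pos 1]
  have h155 : (7.59375 : ℝ) = (3/2)^5 := by norm_num
  refine le_of_pow_le_pow_left₀ (n := 5) (by norm_num) (by norm_num) ?_
  rw [h5]
  linarith [h2, h155]

lemma exp_bound (n m N : ℕ) (hn : 250 ≤ n) (hm : 3*n ≤ 4*m + 1)
    (hN : 2^n * 3^m ≤ (n+1) * N * 4^n) :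
    Real.exp ((1/10 : ℝ) * n) ≤ N := by
  have hE4 : (Real.exp ((1/10:ℝ)*n))^4 = (Real.exp (2/5))^n := by
    rw [← Real.exp_nat_mul, ← Real.exp_nat_mul]
    congr 1
    push_cast
    ring
  have h32 : (Real.exp (2/5))^n ≤ (3/2 : ℝ)^n :=
    pow_le_pow_left₀ (Real.exp_pos _).le exp25 n
  have hnat : (3*(n+1)^4*8^n : ℝ) ≤ 9^n := by exact_mod_cast pow98 n hn
  set a : ℝ := Real.exp ((1/10:ℝ)*n) * ((n+1) * 4^n) with ha
  set b : ℝ := 2^n * 3^m with hb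
  have ha0 : 0 ≤ a := by positivity
  have hb0 : 0 ≤ b := by positivity
  have h3a : 3 * a^4 ≤ 432^n := by
    have e1 : a^4 = (Real.exp (2/5))^n * ((n+1:ℝ)^4 * (4^n:ℝ)^4) := by
      rw [ha, mul_pow, mul_pow, hE4]
    have e2 : ((4:ℝ)^n)^4 = (256:ℝ)^n := by
      rw [← pow_mul, mul_comm, pow_mul]
      norm_num
    calc 3 * a^4 = 3 * ((Real.exp (2/5))^n * ((n+1:ℝ)^4 * (256:ℝ)^n)) := by
          rw [e1, e2]
      _ ≤ 3 * ((3/2:ℝ)^n * ((n+1:ℝ)^4 * (256:ℝ)^n)) := by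
          apply mul_le_mul_of_nonneg_left _ (by norm_num)
          apply mul_le_mul_of_nonneg_right h32 (by positivity)
      _ = (3*(n+1:ℝ)^4*8^n) * ((3/2:ℝ)^n * 32^n) := by
          rw [show (256:ℝ)^n = 8^n * 32^n by rw [← mul_pow]; norm_num]
          ring
      _ = (3*(n+1:ℝ)^4*8^n) * 48^n := by
          rw [show (3/2:ℝ)^n * 32^n = 48^n by rw [← mul_pow]; norm_num]
      _ ≤ (9:ℝ)^n * 48^n := mul_le_mul_of_nonneg_right hnat (by positivity)
      _ = 432^n := by rw [← mul_pow]; norm_num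
  have h3b : (432:ℝ)^n ≤ 3 * b^4 := by
    have e3 : b^4 = (16:ℝ)^n * (3:ℝ)^(m*4) := by
      rw [hb, mul_pow, ← pow_mul, ← pow_mul, mul_comm n 4, pow_mul]
      norm_num
    have e4 : (3:ℝ)^(3*n-1) ≤ (3:ℝ)^(m*4) :=
      pow_le_pow_right₀ (by norm_num) (by omega)
    have e5 : 3 * ((16:ℝ)^n * (3:ℝ)^(3*n-1)) = (432:ℝ)^n := by
      have : (3:ℝ) * (3:ℝ)^(3*n-1) = (3:ℝ)^(3*n) := by
        rw [← pow_succ']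
        congr 1
        omega
      calc 3 * ((16:ℝ)^n * (3:ℝ)^(3*n-1)) = (16:ℝ)^n * (3 * (3:ℝ)^(3*n-1)) := by ring
        _ = (16:ℝ)^n * (3:ℝ)^(3*n) := by rw [this]
        _ = (16:ℝ)^n * (27:ℝ)^n := by rw [pow_mul]; norm_num
        _ = (432:ℝ)^n := by rw [← mul_pow]; norm_num
    calc (432:ℝ)^n = 3 * ((16:ℝ)^n * (3:ℝ)^(3*n-1)) := e5.symm
      _ ≤ 3 * ((16:ℝ)^n * (3:ℝ)^(m*4)) := by
          apply mul_le_mul_of_nonneg_left _ (by norm_num)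
          apply mul_le_mul_of_nonneg_left e4 (by positivity)
      _ = 3 * b^4 := by rw [e3]
  have hab : a ≤ b := by
    refine le_of_pow_le_pow_left₀ (n := 4) (by norm_num) hb0 ?_
    linarith
  have hNr : (b:ℝ) ≤ ((n:ℝ)+1) * N * 4^n := by
    rw [hb]
    exact_mod_cast hN
  have hpos : (0:ℝ) < ((n:ℝ)+1) * 4^n := by positivity
  have : Real.exp ((1/10:ℝ)*n) * (((n:ℝ)+1) * 4^n) ≤ (N:ℝ) * (((n:ℝ)+1) * 4^n) := by
    calc Real.exp ((1/10:ℝ)*n) * (((n:ℝ)+1) * 4^n) = a := by rw [ha]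
      _ ≤ b := hab
      _ ≤ ((n:ℝ)+1) * N * 4^n := hNr
      _ = (N:ℝ) * (((n:ℝ)+1) * 4^n) := by ring
  exact le_of_mul_le_mul_right this hpos

/-- Covering-number heuristic for maximal emergence: in the cube `[0,1]^d` with the
sup metric, there are at least `exp(c k^d)` probability measures supported in the
cube which are pairwise at Kantorovich–Wasserstein distance at least `1/(4k)`. -/
theorem separated_measures_in_cube (d : ℕ) (hd : 1 ≤ d) :
    ∃ c : ℝ, 0 < c ∧ ∃ k₀ : ℕ, ∀ k : ℕ, k₀ ≤ k →
      ∃ N : ℕ, Real.exp (c * (k : ℝ) ^ d) ≤ (N : ℝ) ∧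
      ∃ μ : Fin N → Measure (Fin d → ℝ),
        (∀ i, IsProbabilityMeasure (μ i) ∧
          μ i {x : Fin d → ℝ | ∀ j, x j ∈ Set.Icc (0:ℝ) 1}ᶜ = 0) ∧
        (∀ i j, i ≠ j → 1 / (4 * (k : ℝ)) ≤ kwDist dist (μ i) (μ j)) := by
  refine ⟨1/10, by norm_num, 250, fun k hk => ?_⟩
  have hk1 : 1 ≤ k := by omega
  have hcard : Fintype.card (Fin d → Fin k) = k^d := by
    simp [Fintype.card_fun]
  obtain ⟨F, hF1, hF2, hFcount⟩ := exists_code (Fin d → Fin k)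
  rw [hcard] at hF1 hF2 hFcount
  set n := k^d with hn
  have hn250 : 250 ≤ n := le_trans hk (Nat.le_self_pow (by omega) k)
  have hh0 : (n+1)/2 ≠ 0 := by omega
  refine ⟨F.card, ?_, ?_⟩
  · have hexp := exp_bound n (n - (n+1)/4) F.card hn250 (by omega) hFcount
    have hcast : ((n:ℕ):ℝ) = (k:ℝ)^d := by rw [hn]; push_cast; ring
    rw [hcast] at hexp
    exact hexp
  · set e : Fin F.card → Finset (Fin d → Fin k) :=
      fun i => (F.equivFin.symm i : {x // x ∈ F}) with he
    have hemem : ∀ i, e i ∈ F := fun i => (F.equivFin.symm i).2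
    have heinj : Function.Injective e := by
      intro i j hij
      have := Subtype.ext (p := fun x => x ∈ F) hij
      exact F.equivFin.symm.injective this
    refine ⟨fun i => uMeas d k (e i), fun i => ⟨?_, ?_⟩, fun i j hij => ?_⟩
    · exact uMeas_prob d k (e i) (by rw [hF1 _ (hemem i)]; exact hh0)
    · refine uMeas_apply_null d k (e i) _ fun a _ => ?_
      simp only [Set.mem_compl_iff, not_not]
      exact gridPt_mem_cube d k hk1 a
    · exact kw_lower d k hk1 (e i) (e j) ((n+1)/2) hh0
        (hF1 _ (hemem i)) (hF1 _ (hemem j))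
        (hF2 _ (hemem i) _ (hemem j) (fun hc => hij (heinj hc)))
end
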